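/- Let G be a topological group and W a topological space. For a continuous map λ : W → G, a continuous automorphism α of G, and a self-homeomorphism h of W, let Θ(λ,α,h) denote the self-homeomorphism of G × W given by (x,w) ↦ (α(x)·(λ(h(w)))⁻¹, h(w)). Then Θ(λ₁,α₁,h₁) ∘ Θ(λ₂,α₂,h₂) = Θ(λ₁·(α₁∘λ₂∘h₁⁻¹), α₁∘α₂, h₁∘h₂), where (λ·λ')(w) = λ(w)·λ'(w) denotes the pointwise product. (This identity exhibits the group of weakly G-equivariant homeomorphisms of G × W as the semidirect product M(W,G) ⋊ (Aut(G) × TOP(W)).) -/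

import Mathlib

/-- The weakly `G`-equivariant self-homeomorphism `Θ(λ, α, h)` of `G × W`
determined by a map `λ : W → G`, an automorphism `α` of `G`, and a
self-homeomorphism `h` of `W`: `(x, w) ↦ (α x * (λ (h w))⁻¹, h w)`. -/
def seifertTheta {G W : Type*} [Group G] [TopologicalSpace G] [TopologicalSpace W]
    (lam : W → G) (α : G ≃ₜ G) (h : W ≃ₜ W) : G × W → G × W :=
  fun p => (α p.1 * (lam (h p.2))⁻¹, h p.2)

/-- The composition law
`Θ(λ₁,α₁,h₁) ∘ Θ(λ₂,α₂,h₂) = Θ(λ₁·(α₁∘λ₂∘h₁⁻¹), α₁∘α₂, h₁∘h₂)`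
exhibiting the group of weakly `G`-equivariant homeomorphisms of `G × W` as the
semidirect product `M(W,G) ⋊ (Aut(G) × TOP(W))`.  Here the product of maps
`W → G` is pointwise. -/
theorem seifertTheta_comp
    {G W : Type*} [Group G] [TopologicalSpace G] [IsTopologicalGroup G]
    [TopologicalSpace W]
    (lam₁ lam₂ : W → G) (hlam₁ : Continuous lam₁) (hlam₂ : Continuous lam₂)
    (α₁ α₂ : G ≃ₜ G) (hα₁ : ∀ x y : G, α₁ (x * y) = α₁ x * α₁ y)
    (hα₂ : ∀ x y : G, α₂ (x * y) = α₂ x * α₂ y)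
    (h₁ h₂ : W ≃ₜ W) :
    seifertTheta lam₁ α₁ h₁ ∘ seifertTheta lam₂ α₂ h₂ =
      seifertTheta (fun w => lam₁ w * α₁ (lam₂ (h₁.symm w)))
        (α₂.trans α₁) (h₂.trans h₁) := by
  have hone : α₁ 1 = 1 := by
    have := hα₁ 1 1
    rw [mul_one] at this
    exact mul_eq_left.mp this.symm
  have hinv : ∀ y : G, α₁ y⁻¹ = (α₁ y)⁻¹ := by
    intro y
    have := hα₁ y⁻¹ y
    simp [hone] at this
    exact eq_inv_of_mul_eq_one_left this.symm
  funext p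
  simp only [seifertTheta, Function.comp_apply, Homeomorph.trans_apply, Prod.mk.injEq]
  constructor
  · rw [hα₁, hinv, mul_inv_rev, Homeomorph.symm_apply_apply]
    group
  · trivial
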